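/- Let P be any query plan for a Boolean self-join-free conjunctive query q. Then for every tuple-independent probabilistic database D, P(q) ≤ score(P). -/

import Mathlib

open scoped Classical

namespace PDB

noncomputable section

/-! ### Monotone DNF formulas over a finite variable set -/

/-- Probability that a monotone DNF formula (given by its finite set of implicants, each a
finite set of positive variables) is true, when each variable `x` is independently true with
probability `p x`. -/
def dnfProb {X : Type*} [Fintype X] (p : X → ℝ) (F : Finset (Finset X)) : ℝ :=
  ∑ ω : X → Bool,
    (∏ x : X, if ω x = true then p x else 1 - p x) *
      (if ∃ T ∈ F, ∀ x ∈ T, ω x = true then 1 else 0)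

/-- A prime implicant of a monotone DNF formula: a minimal implicant. -/
def IsPrimeImplicant {X : Type*} (F : Finset (Finset X)) (T : Finset X) : Prop :=
  T ∈ F ∧ ∀ S ∈ F, S ⊆ T → S = T

variable {A V dom : Type*}

/-! ### Self-join-free conjunctive queries: hierarchy and connectivity.
A self-join-free conjunctive query is given by its atoms: a family `atoms : A → Finset V`
assigning to each of the (pairwise distinct) relation symbols its finite set of variables;
`H` denotes the set of head variables (treated as constants); all other variables are
existential.  A Boolean query has `H = ∅`. -/

/-- `at(x)`: the atoms among `S` that contain the variable `x`. -/
def atOf (atoms : A → Finset V) (S : Finset A) (x : V) : Finset A :=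
  S.filter (fun i => x ∈ atoms i)

/-- The query consisting of the atoms `S` is hierarchical, with the variables in `H`
treated as constants (head variables): for any two existential variables, their atom sets
are comparable or disjoint. -/
def HierOn (atoms : A → Finset V) (S : Finset A) (H : Finset V) : Prop :=
  ∀ x : V, x ∉ H → ∀ y : V, y ∉ H →
    atOf atoms S x ⊆ atOf atoms S y ∨ atOf atoms S x ∩ atOf atoms S y = ∅ ∨
      atOf atoms S y ⊆ atOf atoms S x

/-- A Boolean query (with all its atoms) is hierarchical. -/
def Hier [Fintype A] (atoms : A → Finset V) : Prop :=
  HierOn atoms Finset.univ ∅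

/-- The set of atoms `S` is disconnected: it can be partitioned into two nonempty sets
sharing no variables. -/
def Disconn (atoms : A → Finset V) (S : Finset A) : Prop :=
  ∃ T : Finset A, T ⊆ S ∧ T.Nonempty ∧ (S \ T).Nonempty ∧
    ∀ i ∈ T, ∀ j ∈ S \ T, atoms i ∩ atoms j = ∅

/-- `T` is a connected component of the set of atoms `S`: a maximal connected subset. -/
def IsComp (atoms : A → Finset V) (S T : Finset A) : Prop :=
  T ⊆ S ∧ T.Nonempty ∧ ¬ Disconn atoms T ∧
    ∀ U : Finset A, T ⊆ U → U ⊆ S → ¬ Disconn atoms U → U = T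

/-- `xs` is a cut-set of the query with atoms `S`: a set of its variables whose removal
disconnects the query. -/
def IsCutSet (atoms : A → Finset V) (S : Finset A) (xs : Finset V) : Prop :=
  xs ⊆ S.sup atoms ∧ Disconn (fun i => atoms i \ xs) S

/-- a minimal cut-set (min-cut-set) -/
def MinCut (atoms : A → Finset V) (S : Finset A) (xs : Finset V) : Prop :=
  IsCutSet atoms S xs ∧ ∀ ys : Finset V, ys ⊂ xs → ¬ IsCutSet atoms S ys

/-- the separator variables of a Boolean query: the variables occurring in every atom -/
def SepVars [Fintype A] [Fintype V] (atoms : A → Finset V) : Finset V :=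
  Finset.univ.filter (fun x => ∀ i : A, x ∈ atoms i)

/-- the set of variables of a query -/
def varsOf [Fintype A] (atoms : A → Finset V) : Finset V :=
  Finset.univ.sup atoms

/-! ### Dissociations -/

/-- `Δ` is a dissociation of the query with atoms `atoms` and head variables `H`:
each atom receives extra existential variables of the query that it does not already
contain. -/
def IsDiss [Fintype A] (atoms : A → Finset V) (H : Finset V) (Δ : A → Finset V) : Prop :=
  ∀ i : A, Δ i ⊆ (varsOf atoms \ H) \ atoms i

/-- the atoms of the dissociated query `q^Δ` -/
def dissAtoms (atoms Δ : A → Finset V) : A → Finset V := fun i => atoms i ∪ Δ i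

/-- the partial dissociation order `Δ ≼ Δ'` -/
def dissLE (Δ Δ' : A → Finset V) : Prop := ∀ i : A, Δ i ⊆ Δ' i

/-- a safe dissociation: the dissociated query is hierarchical -/
def SafeDiss [Fintype A] (atoms : A → Finset V) (H : Finset V) (Δ : A → Finset V) : Prop :=
  IsDiss atoms H Δ ∧ HierOn (dissAtoms atoms Δ) Finset.univ H

/-- a minimal safe dissociation: no smaller dissociation (in the order `≼`) is safe -/
def MinSafeDiss [Fintype A] (atoms : A → Finset V) (H : Finset V) (Δ : A → Finset V) : Prop :=
  SafeDiss atoms H Δ ∧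
    ∀ Δ' : A → Finset V, SafeDiss atoms H Δ' → dissLE Δ' Δ → Δ' = Δ

/-! ### Tuple-independent probabilistic databases -/

/-- A tuple-independent probabilistic database for the query with atoms `atoms` over the
finite domain `dom`: each relation `i` is a finite set of tuples (functions from the
variables of the atom to the domain), each carrying a probability. -/
structure DB (atoms : A → Finset V) (dom : Type*) where
  tuples : ∀ i : A, Finset ({x // x ∈ atoms i} → dom)
  prob : ∀ i : A, ({x // x ∈ atoms i} → dom) → ℝ

/-- all tuple probabilities lie in [0,1] -/
def DB.Valid {atoms : A → Finset V} (D : DB atoms dom) : Prop :=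
  ∀ i : A, ∀ t ∈ D.tuples i, 0 ≤ D.prob i t ∧ D.prob i t ≤ 1

/-- the restriction of a valuation of all variables to the tuple format of atom `i` -/
def restrict (atoms : A → Finset V) (i : A) (ν : V → dom) : {x // x ∈ atoms i} → dom :=
  fun x => ν x.1

/-- restriction of a tuple to a smaller variable set -/
def restrictTup {xs ys : Finset V} (h : xs ⊆ ys) (t : {x // x ∈ ys} → dom) :
    {x // x ∈ xs} → dom :=
  fun x => t ⟨x.1, h x.2⟩

/-- `P(q)`: the probability that the Boolean query with atoms `atoms` is true in a possible
world chosen by independently including each tuple `t` of `D` with probability `p(t)`. -/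
def queryProb [Fintype A] (atoms : A → Finset V) (D : DB atoms dom) : ℝ :=
  ∑ W : ∀ i : A, {t // t ∈ D.tuples i} → Bool,
    (∏ i : A, ∏ t : {t // t ∈ D.tuples i},
        if W i t = true then D.prob i t.1 else 1 - D.prob i t.1) *
      (if ∃ ν : V → dom, ∀ i : A,
            ∃ h : restrict atoms i ν ∈ D.tuples i, W i ⟨restrict atoms i ν, h⟩ = true
        then 1 else 0)

/-- The dissociated database `D^Δ`: relation `R_i^{ȳ_i}` contains one copy of each tuple
`t ∈ R_i` for every assignment of the added variables `ȳ_i` to domain values, with the same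
probability as `t`. -/
def dissDB [Fintype dom] (atoms Δ : A → Finset V) (D : DB atoms dom) :
    DB (dissAtoms atoms Δ) dom where
  tuples i := Finset.univ.filter
    (fun t : {x // x ∈ dissAtoms atoms Δ i} → dom =>
      restrictTup (show atoms i ⊆ dissAtoms atoms Δ i from Finset.subset_union_left) t
        ∈ D.tuples i)
  prob i t :=
    D.prob i
      (restrictTup (show atoms i ⊆ dissAtoms atoms Δ i from Finset.subset_union_left) t)

/-- `P(q^Δ)`: the probability of the dissociated query on the dissociated database. -/
def dissProb [Fintype A] [Fintype dom] (atoms Δ : A → Finset V) (D : DB atoms dom) : ℝ :=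
  queryProb (dissAtoms atoms Δ) (dissDB atoms Δ D)

/-- The propagation score `ρ(q)`: the minimum of `P(q^Δ)` over all safe dissociations. -/
def propScore [Fintype A] [Fintype dom] (atoms : A → Finset V)
    (D : DB atoms dom) : ℝ :=
  sInf { r : ℝ | ∃ Δ : A → Finset V, SafeDiss atoms ∅ Δ ∧ r = dissProb atoms Δ D }

/-- the database with all tuple probabilities scaled by the factor `f` -/
def scaleDB {atoms : A → Finset V} (D : DB atoms dom) (f : ℝ) : DB atoms dom where
  tuples := D.tuples
  prob i t := f * D.prob i t

/-- relation `i` is deterministic: all its tuples have probability 1 (otherwise it is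
probabilistic) -/
def Deterministic {atoms : A → Finset V} (D : DB atoms dom) (i : A) : Prop :=
  ∀ t ∈ D.tuples i, D.prob i t = 1

/-- The lineage `F_{q,D}` of the Boolean query on `D`: the monotone DNF over the tuples of
`D` whose implicants correspond to the satisfying assignments of the query. -/
def lineage [Fintype A] [Fintype V] [Fintype dom] (atoms : A → Finset V)
    (D : DB atoms dom) :
    Finset (Finset (Σ i : A, {x // x ∈ atoms i} → dom)) :=
  ((Finset.univ : Finset (V → dom)).filter
      (fun ν => ∀ i : A, restrict atoms i ν ∈ D.tuples i)).image
    (fun ν => Finset.univ.image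
      (fun i : A => (⟨i, restrict atoms i ν⟩ : Σ i : A, {x // x ∈ atoms i} → dom)))

/-- The substitution `θ : D^Δ → D` mapping every tuple of a dissociated relation
`R_i^{ȳ_i}` to its projection onto the original variables of `R_i`. -/
def dissTupleMap (atoms Δ : A → Finset V) :
    (Σ i : A, {x // x ∈ dissAtoms atoms Δ i} → dom) →
      Σ i : A, {x // x ∈ atoms i} → dom :=
  fun t =>
    ⟨t.1, restrictTup (show atoms t.1 ⊆ dissAtoms atoms Δ t.1 from Finset.subset_union_left)
      t.2⟩

/-! ### Functional dependencies -/

/-- `Determines Γ xs y`: the variable `y` is in the closure `xs⁺` of `xs` under the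
functional dependencies `Γ`. -/
inductive Determines (Γ : Set (Finset V × V)) : Finset V → V → Prop
  | mem (xs : Finset V) (y : V) (h : y ∈ xs) : Determines Γ xs y
  | step (xs : Finset V) (fd : Finset V × V) (hfd : fd ∈ Γ)
      (hall : ∀ z ∈ fd.1, Determines Γ xs z) : Determines Γ xs fd.2

/-- The functional dependency `fd` is an FD on the attributes of relation `j` that holds
in the database `D`. -/
def FDHolds (atoms : A → Finset V) (D : DB atoms dom) (j : A) (fd : Finset V × V) : Prop :=
  ∃ h1 : fd.1 ⊆ atoms j, ∃ h2 : fd.2 ∈ atoms j,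
    ∀ t ∈ D.tuples j, ∀ t' ∈ D.tuples j,
      (∀ v : V, ∀ hv : v ∈ fd.1, t ⟨v, h1 hv⟩ = t' ⟨v, h1 hv⟩) →
        t ⟨fd.2, h2⟩ = t' ⟨fd.2, h2⟩

/-! ### Query plans -/

/-- Query plans: atoms, duplicate-eliminating projections (given by the retained head
variables), and k-ary natural joins. -/
inductive Plan (A V : Type*) where
  | atom : A → Plan A V
  | proj : Finset V → Plan A V → Plan A V
  | join : List (Plan A V) → Plan A V

namespace Plan

/-- the head variables of a plan -/
def hvar (atoms : A → Finset V) : Plan A V → Finset V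
  | .atom i => atoms i
  | .proj hv _ => hv
  | .join Ps => Ps.attach.foldr (fun P acc => hvar atoms P.1 ∪ acc) ∅
decreasing_by
  all_goals simp_wf
  all_goals try have := List.sizeOf_lt_of_mem P.2
  all_goals omega

/-- the multiset of atoms used by a plan -/
def atomsOf : Plan A V → Multiset A
  | .atom i => {i}
  | .proj _ P => atomsOf P
  | .join Ps => Ps.attach.foldr (fun P acc => atomsOf P.1 + acc) 0
decreasing_by
  all_goals simp_wf
  all_goals try have := List.sizeOf_lt_of_mem P.2
  all_goals omega

def isProj : Plan A V → Prop
  | .proj _ _ => True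
  | _ => False

def isJoin : Plan A V → Prop
  | .join _ => True
  | _ => False

/-- structural well-formedness: projections only retain available variables, joins are at
least binary, and joins and projections alternate -/
def WF (atoms : A → Finset V) : Plan A V → Prop
  | .atom _ => True
  | .proj hv P => hv ⊆ hvar atoms P ∧ ¬ isProj P ∧ WF atoms P
  | .join Ps => 2 ≤ Ps.length ∧ ∀ P ∈ Ps, ¬ isJoin P ∧ WF atoms P
decreasing_by
  all_goals simp_wf
  all_goals try rename_i h; try have := List.sizeOf_lt_of_mem h
  all_goals omega

/-- a safe plan: at every join, all subplans have the same head variables -/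
def Safe (atoms : A → Finset V) : Plan A V → Prop
  | .atom _ => True
  | .proj _ P => Safe atoms P
  | .join Ps => (∀ P ∈ Ps, Safe atoms P) ∧
      ∀ P ∈ Ps, ∀ Q ∈ Ps, hvar atoms P = hvar atoms Q
decreasing_by
  all_goals simp_wf
  all_goals try rename_i h; try have := List.sizeOf_lt_of_mem h
  all_goals omega

/-- `P` is a (well-formed) query plan for the query with atoms `atoms` and head variables
`H`: it uses every atom exactly once and its output head variables are exactly `H`
(for a Boolean query, `H = ∅`, i.e. all existential variables are projected away). -/
def IsPlanFor [Fintype A] (atoms : A → Finset V) (H : Finset V) (P : Plan A V) : Prop :=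
  WF atoms P ∧ atomsOf P = (Finset.univ : Finset A).val ∧ hvar atoms P = H

/-- the join variables: the union of the head variables of a list of subplans -/
def joinVars (atoms : A → Finset V) (Ps : List (Plan A V)) : Finset V :=
  (Ps.map (hvar atoms)).foldr (· ∪ ·) ∅

/-- Identification of plans up to join order, flattening of nested joins, and removal of
trivial (identity) projections. -/
inductive Equiv (atoms : A → Finset V) : Plan A V → Plan A V → Prop
  | refl (P) : Equiv atoms P P
  | symm {P Q} : Equiv atoms P Q → Equiv atoms Q P
  | trans {P Q R} : Equiv atoms P Q → Equiv atoms Q R → Equiv atoms P R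
  | projCongr (hv) {P Q} : Equiv atoms P Q → Equiv atoms (.proj hv P) (.proj hv Q)
  | joinCongr {Ps Qs} : List.Forall₂ (Equiv atoms) Ps Qs →
      Equiv atoms (.join Ps) (.join Qs)
  | joinPerm {Ps Qs} : Ps.Perm Qs → Equiv atoms (.join Ps) (.join Qs)
  | joinFlatten (Ps Qs Rs) :
      Equiv atoms (.join (Ps ++ .join Qs :: Rs)) (.join (Ps ++ Qs ++ Rs))
  | projTriv {P} (hv) (h : hv = hvar atoms P) : Equiv atoms (.proj hv P) P

/-- The extensional score semantics of a plan evaluated on the database `D`: output tuples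
are represented by total valuations `ν : V → dom` (only the values on the head variables
matter; duplicates are represented canonically by the default value `d₀` outside the head
variables).  Joins multiply scores, and duplicate-eliminating projections combine the
scores `s_1, …, s_n` of the tuples projecting to a common output tuple to
`1 - ∏ (1 - s_i)`. -/
def score [Fintype V] [Fintype dom] (atoms : A → Finset V) (D : DB atoms dom) (d₀ : dom) :
    Plan A V → (V → dom) → ℝ
  | .atom i, ν =>
      if restrict atoms i ν ∈ D.tuples i then D.prob i (restrict atoms i ν) else 0
  | .proj hv P, ν =>
      1 - ∏ μ ∈ Finset.univ.filter (fun μ : V → dom =>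
            (∀ v : V, v ∉ hvar atoms P → μ v = d₀) ∧ ∀ v ∈ hv, μ v = ν v),
          (1 - score atoms D d₀ P μ)
  | .join Ps, ν => (Ps.attach.map (fun P => score atoms D d₀ P.1 ν)).prod
decreasing_by
  all_goals simp_wf
  all_goals try have := List.sizeOf_lt_of_mem P.2
  all_goals omega

/-- the score of a Boolean plan -/
def bscore [Fintype V] [Fintype dom] [Inhabited dom] (atoms : A → Finset V)
    (D : DB atoms dom) (P : Plan A V) : ℝ :=
  score atoms D default P (fun _ => default)

/-- Dropping the dissociated variables from a plan (for a dissociated query) to obtain the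
corresponding plan `P^Δ` for the original query: every projection list is restricted to
the variables actually available in the original query. -/
def eraseTo (atoms : A → Finset V) : Plan A V → Plan A V
  | .atom i => .atom i
  | .proj hv P => .proj (hv ∩ hvar atoms (eraseTo atoms P)) (eraseTo atoms P)
  | .join Ps => .join (Ps.attach.map (fun P => eraseTo atoms P.1))
decreasing_by
  all_goals simp_wf
  all_goals try have := List.sizeOf_lt_of_mem P.2
  all_goals omega

/-- The dissociation `Δ^P` corresponding to a plan `P`: for each join operator with join
variables `JVar = ⋃_j HVar(P_j)`, every relation occurring in subplan `P_j` receives the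
variables `JVar ∖ HVar(P_j)`. -/
def dissOf (atoms : A → Finset V) : Plan A V → A → Finset V
  | .atom _ => fun _ => ∅
  | .proj _ P => dissOf atoms P
  | .join Ps => fun i =>
      Ps.attach.foldr (fun P acc =>
        (if i ∈ atomsOf P.1 then
            (joinVars atoms Ps \ hvar atoms P.1) ∪ dissOf atoms P.1 i
          else ∅) ∪ acc) ∅
decreasing_by
  all_goals simp_wf
  all_goals try have := List.sizeOf_lt_of_mem P.2
  all_goals omega

end Plan

/-- The recursive algorithm `MP` enumerating the minimal query plans of the query with
atom set `S` and head variables `H` (head variables are treated as constants):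
* if the query has a single atom, return the projection of that atom onto the head
  variables;
* if the query (after removing the head variables) is disconnected, return any join of
  minimal plans of its connected components (each component keeping the head variables
  occurring in it);
* otherwise, for any minimal cut-set `ys` of the query minus its head variables, return
  the plan projecting `ys` away from any minimal plan of the query with head variables
  `H ∪ ys`. -/
inductive MPrel (atoms : A → Finset V) : Finset A → Finset V → Plan A V → Prop
  | single (i : A) (H : Finset V) : MPrel atoms {i} H (.proj H (.atom i))
  | disc (S : Finset A) (H : Finset V) (parts : List (Finset A)) (Ps : List (Plan A V))
      (hdup : parts.Nodup) (hlen : 2 ≤ parts.length)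
      (hparts : ∀ T : Finset A, T ∈ parts ↔ IsComp (fun i => atoms i \ H) S T)
      (hlen2 : parts.length = Ps.length)
      (hPs : ∀ n : ℕ, ∀ h1 : n < parts.length, ∀ h2 : n < Ps.length,
        MPrel atoms parts[n] (H ∩ (parts[n]).sup atoms) Ps[n]) :
      MPrel atoms S H (.join Ps)
  | conn (S : Finset A) (H : Finset V) (ys : Finset V) (P : Plan A V)
      (hcard : 2 ≤ S.card)
      (hconn : ¬ Disconn (fun i => atoms i \ H) S)
      (hcut : MinCut (fun i => atoms i \ H) S ys)
      (hP : MPrel atoms S (H ∪ ys) P) :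
      MPrel atoms S H (.proj H P)


section GenericProb

variable {ι : Type*} [Fintype ι]

/-- weight of a boolean valuation -/
def wgt (p : ι → ℝ) (ω : ι → Bool) : ℝ := ∏ i, if ω i then p i else 1 - p i

/-- expectation -/
def ex (p : ι → ℝ) (f : (ι → Bool) → ℝ) : ℝ := ∑ ω, wgt p ω * f ω

/-- probability of an event -/
def pr (p : ι → ℝ) (E : (ι → Bool) → Prop) : ℝ := ex p (fun ω => if E ω then 1 else 0)

lemma wgt_nonneg {p : ι → ℝ} (hp : ∀ i, 0 ≤ p i ∧ p i ≤ 1) (ω : ι → Bool) : 0 ≤ wgt p ω :=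
  Finset.prod_nonneg fun i _ => by rcases hp i with ⟨h1, h2⟩; split <;> linarith

lemma ex_one (p : ι → ℝ) : ex p (fun _ => 1) = 1 := by
  unfold ex wgt
  simp only [mul_one]
  rw [← Fintype.prod_sum (fun i (b : Bool) => if b then p i else 1 - p i)]
  simp

lemma ex_mono {p : ι → ℝ} (hp : ∀ i, 0 ≤ p i ∧ p i ≤ 1) {f g : (ι → Bool) → ℝ}
    (h : ∀ ω, f ω ≤ g ω) : ex p f ≤ ex p g :=
  Finset.sum_le_sum fun ω _ => mul_le_mul_of_nonneg_left (h ω) (wgt_nonneg hp ω)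

lemma ex_nonneg {p : ι → ℝ} (hp : ∀ i, 0 ≤ p i ∧ p i ≤ 1) {f : (ι → Bool) → ℝ}
    (h : ∀ ω, 0 ≤ f ω) : 0 ≤ ex p f := by
  have := ex_mono hp (f := fun _ => 0) (g := f) h
  simpa [ex] using this

lemma ex_sub_const (p : ι → ℝ) (f : (ι → Bool) → ℝ) :
    ex p (fun ω => 1 - f ω) = 1 - ex p f := by
  have h1 : ex p (fun ω => 1 - f ω) = ex p (fun _ => 1) - ex p f := by
    unfold ex
    rw [← Finset.sum_sub_distrib]
    exact Finset.sum_congr rfl fun ω _ => by ring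
  rw [h1, ex_one]

lemma pr_nonneg {p : ι → ℝ} (hp : ∀ i, 0 ≤ p i ∧ p i ≤ 1) (E : (ι → Bool) → Prop) :
    0 ≤ pr p E :=
  ex_nonneg hp fun ω => by by_cases h : E ω <;> simp [h]

lemma pr_le_one {p : ι → ℝ} (hp : ∀ i, 0 ≤ p i ∧ p i ≤ 1) (E : (ι → Bool) → Prop) :
    pr p E ≤ 1 := by
  have := ex_mono hp (f := fun ω => if E ω then (1:ℝ) else 0) (g := fun _ => 1)
    (fun ω => by by_cases h : E ω <;> simp [h])
  simpa [ex_one, pr] using this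

lemma pr_mono {p : ι → ℝ} (hp : ∀ i, 0 ≤ p i ∧ p i ≤ 1) {E F : (ι → Bool) → Prop}
    (h : ∀ ω, E ω → F ω) : pr p E ≤ pr p F :=
  ex_mono hp fun ω => by
    by_cases hE : E ω
    · simp [hE, h ω hE]
    · by_cases hF : F ω <;> simp [hE, hF]

lemma pr_congr {p : ι → ℝ} {E F : (ι → Bool) → Prop} (h : ∀ ω, E ω ↔ F ω) :
    pr p E = pr p F := by
  unfold pr ex
  exact Finset.sum_congr rfl fun ω _ => by
    by_cases hE : E ω
    · simp [hE, (h ω).mp hE]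
    · have hF : ¬ F ω := fun hf => hE ((h ω).mpr hf)
      simp [hE, hF]

lemma pr_false (p : ι → ℝ) : pr p (fun _ => False) = 0 := by
  simp [pr, ex]


/-! ### Coordinate splitting and Harris inequality -/

/-- extend a valuation on `{j // j ≠ x}` by the value `b` at `x` -/
def extC (x : ι) (b : Bool) (ω' : {j : ι // j ≠ x} → Bool) : ι → Bool :=
  fun j => if h : j = x then b else ω' ⟨j, h⟩

@[simp] lemma extC_self (x : ι) (b : Bool) (ω' : {j : ι // j ≠ x} → Bool) :
    extC x b ω' x = b := by simp [extC]

@[simp] lemma extC_ne (x : ι) (b : Bool) (ω' : {j : ι // j ≠ x} → Bool)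
    (j : {j : ι // j ≠ x}) : extC x b ω' j.1 = ω' j := by simp [extC, j.2]

/-- the splitting equivalence at coordinate `x` -/
def splitE (x : ι) : (ι → Bool) ≃ Bool × ({j : ι // j ≠ x} → Bool) where
  toFun ω := (ω x, fun j => ω j.1)
  invFun q := extC x q.1 q.2
  left_inv ω := by
    funext j
    by_cases h : j = x
    · subst h; simp [extC]
    · simp [extC, h]
  right_inv q := by
    refine Prod.ext (by simp) ?_
    funext j
    simp

lemma wgt_extC (p : ι → ℝ) (x : ι) (b : Bool) (ω' : {j : ι // j ≠ x} → Bool) :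
    wgt p (extC x b ω') =
      (if b then p x else 1 - p x) * wgt (fun j : {j : ι // j ≠ x} => p j.1) ω' := by
  unfold wgt
  rw [Fintype.prod_eq_mul_prod_compl x (fun i => if extC x b ω' i then p i else 1 - p i)]
  congr 1
  · simp
  · rw [Finset.prod_subtype (p := fun j : ι => j ≠ x) ({x}ᶜ : Finset ι) (fun j => by simp)
      (fun i => if extC x b ω' i then p i else 1 - p i)]
    exact Finset.prod_congr rfl fun j _ => by simp

lemma ex_split (p : ι → ℝ) (x : ι) (f : (ι → Bool) → ℝ) :
    ex p f = (1 - p x) * ex (fun j : {j : ι // j ≠ x} => p j.1) (fun ω' => f (extC x false ω'))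
      + p x * ex (fun j : {j : ι // j ≠ x} => p j.1) (fun ω' => f (extC x true ω')) := by
  have h0 : ex p f = ∑ q : Bool × ({j : ι // j ≠ x} → Bool),
      wgt p ((splitE x).symm q) * f ((splitE x).symm q) := by
    rw [ex, ← Equiv.sum_comp (splitE x).symm (fun ω => wgt p ω * f ω)]
  have h1 : ∀ (b : Bool), (∑ ω' : {j : ι // j ≠ x} → Bool,
      wgt p ((splitE x).symm (b, ω')) * f ((splitE x).symm (b, ω'))) =
      (if b then p x else 1 - p x) *
        ex (fun j : {j : ι // j ≠ x} => p j.1) (fun ω' => f (extC x b ω')) := by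
    intro b
    rw [ex, Finset.mul_sum]
    refine Finset.sum_congr (by congr!) fun ω' _ => ?_
    show wgt p (extC x b ω') * f (extC x b ω') = _
    rw [wgt_extC]; ring
  rw [h0, Fintype.sum_prod_type, Fintype.sum_bool, h1 true, h1 false,
    if_pos rfl, if_neg (by simp)]
  ring

/-- The Harris/FKG inequality on the Boolean cube with independent coordinates. -/
theorem harris {ι : Type*} [Fintype ι] (p : ι → ℝ) (hp : ∀ i, 0 ≤ p i ∧ p i ≤ 1)
    (f g : (ι → Bool) → ℝ) (hf : Monotone f) (hg : Monotone g) :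
    ex p f * ex p g ≤ ex p (fun ω => f ω * g ω) := by
  cases isEmpty_or_nonempty ι with
  | inl h =>
    have hw : ∀ ω : ι → Bool, wgt p ω = 1 := fun ω => by
      rw [wgt, Finset.univ_eq_empty, Finset.prod_empty]
    have hu : ∀ (h : (ι → Bool) → ℝ), ex p h = h default := by
      intro h
      rw [ex, Fintype.sum_unique, hw, one_mul]
      try exact congrArg h (Subsingleton.elim _ _)
    rw [hu, hu, hu]
  | inr h =>
    obtain ⟨x⟩ := h
    set ι' := {j : ι // j ≠ x}
    set p' : ι' → ℝ := fun j => p j.1 with hp'def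
    have hp' : ∀ j : ι', 0 ≤ p' j ∧ p' j ≤ 1 := fun j => hp j.1
    have hmono : ∀ (h : (ι → Bool) → ℝ), Monotone h → ∀ b,
        Monotone (fun ω' : ι' → Bool => h (extC x b ω')) := by
      intro h hh b ω' σ' hle
      refine hh fun j => ?_
      by_cases hj : j = x
      · subst hj; simp
      · simpa [extC, hj] using hle ⟨j, hj⟩
    have hle_tf : ∀ (h : (ι → Bool) → ℝ), Monotone h → ∀ ω' : ι' → Bool,
        h (extC x false ω') ≤ h (extC x true ω') := by
      intro h hh ω'
      refine hh fun j => ?_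
      by_cases hj : j = x
      · subst hj; simp
      · simp [extC, hj]
    set a := ex p' (fun ω' => f (extC x false ω'))
    set A := ex p' (fun ω' => f (extC x true ω'))
    set b := ex p' (fun ω' => g (extC x false ω'))
    set B := ex p' (fun ω' => g (extC x true ω'))
    have haA : a ≤ A := ex_mono hp' (hle_tf f hf)
    have hbB : b ≤ B := ex_mono hp' (hle_tf g hg)
    have IH1 : a * b ≤ ex p' (fun ω' => f (extC x false ω') * g (extC x false ω')) :=
      harris p' hp' _ _ (hmono f hf false) (hmono g hg false)
    have IH2 : A * B ≤ ex p' (fun ω' => f (extC x true ω') * g (extC x true ω')) :=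
      harris p' hp' _ _ (hmono f hf true) (hmono g hg true)
    have hsf := ex_split p x f
    have hsg := ex_split p x g
    have hsfg := ex_split p x (fun ω => f ω * g ω)
    rw [hsf, hsg, hsfg]
    have hq := hp x
    nlinarith [mul_le_mul_of_nonneg_left IH1 (by linarith : (0:ℝ) ≤ 1 - p x),
      mul_le_mul_of_nonneg_left IH2 hq.1, mul_nonneg hq.1 (by linarith : (0:ℝ) ≤ 1 - p x),
      mul_nonneg (mul_nonneg hq.1 (by linarith : (0:ℝ) ≤ 1 - p x))
        (mul_nonneg (sub_nonneg.2 haA) (sub_nonneg.2 hbB))]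
termination_by Fintype.card ι
decreasing_by
  all_goals exact Fintype.card_subtype_lt (x := x) (by simp)


lemma ex_congr {p : ι → ℝ} {f g : (ι → Bool) → ℝ} (h : ∀ ω, f ω = g ω) :
    ex p f = ex p g :=
  Finset.sum_congr rfl fun ω _ => by rw [h ω]

lemma ex_zero (p : ι → ℝ) : ex p (fun _ => 0) = 0 := by simp [ex]

lemma ex_expand (p : ι → ℝ) (f g : (ι → Bool) → ℝ) :
    ex p (fun ω => (1 - f ω) * (1 - g ω))
      = 1 - ex p f - ex p g + ex p (fun ω => f ω * g ω) := by
  have h1 : ∀ ω : ι → Bool, wgt p ω * ((1 - f ω) * (1 - g ω)) =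
      wgt p ω * 1 - wgt p ω * f ω - wgt p ω * g ω + wgt p ω * (f ω * g ω) := fun ω => by
    ring
  show (∑ ω : ι → Bool, wgt p ω * ((1 - f ω) * (1 - g ω))) = _
  rw [Finset.sum_congr rfl fun ω _ => h1 ω, Finset.sum_add_distrib,
    Finset.sum_sub_distrib, Finset.sum_sub_distrib]
  have h2 : (∑ ω : ι → Bool, wgt p ω * 1) = 1 := ex_one p
  rw [h2]
  rfl

lemma harris_anti {p : ι → ℝ} (hp : ∀ i, 0 ≤ p i ∧ p i ≤ 1) {f g : (ι → Bool) → ℝ}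
    (hf : Antitone f) (hg : Antitone g) :
    ex p f * ex p g ≤ ex p (fun ω => f ω * g ω) := by
  have hf' : Monotone (fun ω => 1 - f ω) := fun a b hab => by
    have := hf hab; dsimp; linarith
  have hg' : Monotone (fun ω => 1 - g ω) := fun a b hab => by
    have := hg hab; dsimp; linarith
  have h := harris p hp _ _ hf' hg'
  rw [ex_expand, ex_sub_const, ex_sub_const] at h
  nlinarith [h]

lemma harris_prod {κ : Type*} {p : ι → ℝ} (hp : ∀ i, 0 ≤ p i ∧ p i ≤ 1)
    (s : Finset κ) (F : κ → (ι → Bool) → ℝ)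
    (hanti : ∀ j ∈ s, Antitone (F j)) (h0 : ∀ j ∈ s, ∀ ω, 0 ≤ F j ω) :
    ∏ j ∈ s, ex p (F j) ≤ ex p (fun ω => ∏ j ∈ s, F j ω) := by
  induction s using Finset.induction with
  | empty => simp [ex_one]
  | @insert a s ha ih =>
    have hanti' : ∀ j ∈ s, Antitone (F j) := fun j hj => hanti j (Finset.mem_insert_of_mem hj)
    have h0' : ∀ j ∈ s, ∀ ω, 0 ≤ F j ω := fun j hj => h0 j (Finset.mem_insert_of_mem hj)
    have ihs := ih hanti' h0'
    have hPanti : Antitone (fun ω => ∏ j ∈ s, F j ω) := fun ω ω' hle => by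
      exact Finset.prod_le_prod (fun j hj => h0' j hj ω') (fun j hj => hanti' j hj hle)
    have hPnn : ∀ ω, 0 ≤ ∏ j ∈ s, F j ω := fun ω =>
      Finset.prod_nonneg fun j hj => h0' j hj ω
    have hFa : Antitone (F a) := hanti a (Finset.mem_insert_self a s)
    have step1 : ex p (F a) * ex p (fun ω => ∏ j ∈ s, F j ω) ≤
        ex p (fun ω => F a ω * ∏ j ∈ s, F j ω) := harris_anti hp hFa hPanti
    have step2 : ex p (F a) * ∏ j ∈ s, ex p (F j) ≤
        ex p (F a) * ex p (fun ω => ∏ j ∈ s, F j ω) :=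
      mul_le_mul_of_nonneg_left ihs (ex_nonneg hp fun ω => h0 a (Finset.mem_insert_self a s) ω)
    calc ∏ j ∈ insert a s, ex p (F j) = ex p (F a) * ∏ j ∈ s, ex p (F j) := by
          rw [Finset.prod_insert ha]
      _ ≤ ex p (fun ω => F a ω * ∏ j ∈ s, F j ω) := le_trans step2 step1
      _ = ex p (fun ω => ∏ j ∈ insert a s, F j ω) :=
          ex_congr fun ω => by rw [Finset.prod_insert ha]

lemma sum_univ_congr {α M : Type*} [AddCommMonoid M] (F1 F2 : Fintype α)
    (f g : α → M) (h : ∀ a, f a = g a) :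
    @Finset.sum α M _ (@Finset.univ α F1) f = @Finset.sum α M _ (@Finset.univ α F2) g := by
  cases Subsingleton.elim F1 F2
  exact Finset.sum_congr rfl fun a _ => h a

/-! ### Independence for functions with disjoint supports -/

/-- `f` depends only on the coordinates in `s` -/
def DOnF (f : (ι → Bool) → ℝ) (s : Set ι) : Prop :=
  ∀ ω ω' : ι → Bool, (∀ i ∈ s, ω i = ω' i) → f ω = f ω'

lemma ex_mul_indep (p : ι → ℝ) (s : Set ι) (f g : (ι → Bool) → ℝ)
    (hf : DOnF f s) (hg : DOnF g sᶜ) :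
    ex p (fun ω => f ω * g ω) = ex p f * ex p g := by
  set e := Equiv.piEquivPiSubtypeProd (fun i : ι => i ∈ s) (fun _ => Bool) with he
  set glue := e.symm with hglue
  have hmem : ∀ (q : (∀ _ : {x : ι // x ∈ s}, Bool) × (∀ _ : {x : ι // ¬ x ∈ s}, Bool))
      (i : ι) (h : i ∈ s), glue q i = q.1 ⟨i, h⟩ := by
    intro q i h
    simp [hglue, he, Equiv.piEquivPiSubtypeProd, h]
  have hnmem : ∀ (q : (∀ _ : {x : ι // x ∈ s}, Bool) × (∀ _ : {x : ι // ¬ x ∈ s}, Bool))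
      (i : ι) (h : ¬ i ∈ s), glue q i = q.2 ⟨i, h⟩ := by
    intro q i h
    simp [hglue, he, Equiv.piEquivPiSubtypeProd, h]
  set p1 : {x : ι // x ∈ s} → ℝ := fun j => p j.1 with hp1
  set p2 : {x : ι // ¬ x ∈ s} → ℝ := fun j => p j.1 with hp2
  have hwgt : ∀ q, wgt p (glue q) = wgt p1 q.1 * wgt p2 q.2 := by
    intro q
    rw [wgt, ← Fintype.prod_subtype_mul_prod_subtype (fun i : ι => i ∈ s)
      (fun i => if glue q i then p i else 1 - p i)]
    congr 1
    · exact Finset.prod_congr rfl fun j _ => by rw [hmem q j.1 j.2]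
    · exact Finset.prod_congr rfl fun j _ => by rw [hnmem q j.1 j.2]
  set F : (∀ _ : {x : ι // x ∈ s}, Bool) → ℝ := fun ω1 => f (glue (ω1, fun _ => false))
    with hFdef
  set G : (∀ _ : {x : ι // ¬ x ∈ s}, Bool) → ℝ := fun ω2 => g (glue (fun _ => false, ω2))
    with hGdef
  have hFf : ∀ q, f (glue q) = F q.1 := by
    intro q
    refine hf _ _ fun i hi => ?_
    rw [hmem q i hi, hmem (q.1, fun _ => false) i hi]
  have hGg : ∀ q, g (glue q) = G q.2 := by
    intro q
    refine hg _ _ fun i hi => ?_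
    rw [hnmem q i hi, hnmem (fun _ => false, q.2) i hi]
  have hsum : ∀ (h : (ι → Bool) → ℝ), ex p h =
      ∑ ω1, ∑ ω2, wgt p (glue (ω1, ω2)) * h (glue (ω1, ω2)) := by
    intro h
    rw [ex, ← Equiv.sum_comp glue (fun ω => wgt p ω * h ω), Fintype.sum_prod_type]
  have e1 : ex p (fun ω => f ω * g ω) = ex p1 F * ex p2 G := by
    rw [hsum, ex, ex, Finset.sum_mul_sum]
    refine sum_univ_congr _ _ _ _ fun ω1 => ?_
    refine sum_univ_congr _ _ _ _ fun ω2 => ?_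
    rw [hwgt, hFf, hGg]
    ring
  have e2 : ex p f = ex p1 F * ex p2 (fun _ => 1) := by
    rw [hsum, ex, ex, Finset.sum_mul_sum]
    refine sum_univ_congr _ _ _ _ fun ω1 => ?_
    refine sum_univ_congr _ _ _ _ fun ω2 => ?_
    rw [hwgt, hFf]
    ring
  have e3 : ex p g = ex p1 (fun _ => 1) * ex p2 G := by
    rw [hsum, ex, ex, Finset.sum_mul_sum]
    refine sum_univ_congr _ _ _ _ fun ω1 => ?_
    refine sum_univ_congr _ _ _ _ fun ω2 => ?_
    rw [hwgt, hGg]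
    ring
  rw [e1, e2, e3, ex_one, ex_one]
  ring

/-- An event depending only on coordinates in `s`. -/
def DOn (E : (ι → Bool) → Prop) (s : Set ι) : Prop :=
  ∀ ω ω' : ι → Bool, (∀ i ∈ s, ω i = ω' i) → (E ω ↔ E ω')

lemma pr_and_indep (p : ι → ℝ) (s : Set ι) (E F : (ι → Bool) → Prop)
    (hE : DOn E s) (hF : DOn F sᶜ) :
    pr p (fun ω => E ω ∧ F ω) = pr p E * pr p F := by
  have h1 : pr p (fun ω => E ω ∧ F ω) =
      ex p (fun ω => (if E ω then (1:ℝ) else 0) * (if F ω then (1:ℝ) else 0)) := by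
    refine ex_congr fun ω => ?_
    by_cases hEω : E ω <;> by_cases hFω : F ω <;> simp [hEω, hFω]
  rw [h1]
  exact ex_mul_indep p s _ _
    (fun ω ω' h => by rw [if_congr (hE ω ω' h) rfl rfl])
    (fun ω ω' h => by rw [if_congr (hF ω ω' h) rfl rfl])

/-- probability that a fixed coordinate is true -/
lemma pr_coord (p : ι → ℝ) (x : ι) : pr p (fun ω => ω x = true) = p x := by
  have bridge : pr p (fun ω => ω x = true)
      = ex p (fun ω => if ω x = true then (1:ℝ) else 0) :=
    sum_univ_congr _ _ _ _ fun ω => by by_cases h : ω x = true <;> simp [h]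
  rw [bridge, ex_split p x (fun ω => if ω x = true then (1:ℝ) else 0)]
  have h1 : ex (fun j : {j : ι // j ≠ x} => p j.1)
      (fun ω' => if extC x false ω' x = true then (1:ℝ) else 0) = 0 := by
    rw [ex_congr (g := fun _ => 0) fun ω' => by simp]
    exact ex_zero _
  have h2 : ex (fun j : {j : ι // j ≠ x} => p j.1)
      (fun ω' => if extC x true ω' x = true then (1:ℝ) else 0) = 1 := by
    rw [ex_congr (g := fun _ => 1) fun ω' => by simp]
    exact ex_one _
  rw [h1, h2]
  ring

/-! ### Union bound via Harris -/

lemma prod_one_sub_ind {κ : Type*} (s : Finset κ) (E : κ → Prop) :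
    (∏ j ∈ s, (1 - (if E j then (1:ℝ) else 0))) = if (∀ j ∈ s, ¬ E j) then 1 else 0 := by
  induction s using Finset.induction with
  | empty => simp
  | @insert a s ha ih =>
    rw [Finset.prod_insert ha, ih]
    by_cases hEa : E a
    · have : ¬ (∀ j ∈ insert a s, ¬ E j) := fun h => h a (Finset.mem_insert_self a s) hEa
      simp [hEa, this]
    · by_cases hall : ∀ j ∈ s, ¬ E j
      · have : ∀ j ∈ insert a s, ¬ E j := by
          intro j hj
          rcases Finset.mem_insert.1 hj with h | h
          · subst h; exact hEa
          · exact hall j h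
        simp [hEa, hall, this]
      · have : ¬ (∀ j ∈ insert a s, ¬ E j) := fun h =>
          hall fun j hj => h j (Finset.mem_insert_of_mem hj)
        simp [hEa, hall, this]

lemma pr_not (p : ι → ℝ) (E : (ι → Bool) → Prop) :
    pr p (fun ω => ¬ E ω) = 1 - pr p E := by
  rw [pr, pr, ← ex_sub_const]
  refine ex_congr fun ω => ?_
  by_cases h : E ω <;> simp [h]

lemma pr_union {κ : Type*} {p : ι → ℝ} (hp : ∀ i, 0 ≤ p i ∧ p i ≤ 1)
    (s : Finset κ) (E : κ → (ι → Bool) → Prop)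
    (hmono : ∀ j ∈ s, ∀ ω ω' : ι → Bool, ω ≤ ω' → E j ω → E j ω') :
    pr p (fun ω => ∃ j ∈ s, E j ω) ≤ 1 - ∏ j ∈ s, (1 - pr p (E j)) := by
  have hstep : pr p (fun ω => ∃ j ∈ s, E j ω) =
      1 - pr p (fun ω => ∀ j ∈ s, ¬ E j ω) := by
    rw [← pr_not]
    refine pr_congr fun ω => ?_
    constructor
    · rintro ⟨j, hj, hEj⟩ h
      exact h j hj hEj
    · intro h
      by_contra hne
      push_neg at hne
      exact h fun j hj hEj => hne j hj hEj
  rw [hstep]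
  have hkey : pr p (fun ω => ∀ j ∈ s, ¬ E j ω) =
      ex p (fun ω => ∏ j ∈ s, (1 - (if E j ω then (1:ℝ) else 0))) := by
    refine ex_congr fun ω => ?_
    rw [prod_one_sub_ind s (fun j => E j ω)]
    by_cases h : ∀ j ∈ s, ¬ E j ω <;> simp [h]
  have hge : ∏ j ∈ s, (1 - pr p (E j)) ≤ pr p (fun ω => ∀ j ∈ s, ¬ E j ω) := by
    rw [hkey]
    have := harris_prod hp s (fun j ω => 1 - (if E j ω then (1:ℝ) else 0))
      (fun j hj ω ω' hle => by
        by_cases hEω : E j ω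
        · simp [hEω, hmono j hj ω ω' hle hEω]
        · by_cases hEω' : E j ω' <;> simp [hEω, hEω'])
      (fun j hj ω => by by_cases hEω : E j ω <;> simp [hEω])
    refine le_trans (le_of_eq ?_) this
    refine Finset.prod_congr rfl fun j hj => ?_
    rw [ex_sub_const]
    rfl
  linarith


end GenericProb

/-! ### Plan structure lemmas -/

section PlanStruct

variable {A V dom : Type*}

open Plan

lemma attach_foldr_eq {α β : Type*} (l : List α) (g : α → β → β) (b : β) :
    l.attach.foldr (fun x acc => g x.1 acc) b = l.foldr g b := by
  induction l with
  | nil => rfl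
  | cons a l ih =>
    rw [List.attach_cons, List.foldr_cons, List.foldr_map]
    show g a (l.attach.foldr (fun x acc => g x.1 acc) b) = _
    rw [ih, List.foldr_cons]

lemma atomsOf_atom (i : A) : (Plan.atom i : Plan A V).atomsOf = {i} := by
  rw [Plan.atomsOf]

lemma atomsOf_proj (hv : Finset V) (P : Plan A V) :
    (Plan.proj hv P).atomsOf = P.atomsOf := by
  rw [Plan.atomsOf]

lemma atomsOf_join (Ps : List (Plan A V)) :
    (Plan.join Ps).atomsOf = (Ps.map Plan.atomsOf).sum := by
  rw [Plan.atomsOf]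
  refine (attach_foldr_eq Ps (fun P acc => P.atomsOf + acc) 0).trans ?_
  induction Ps with
  | nil => rfl
  | cons Q Ps ih => rw [List.foldr_cons, ih, List.map_cons, List.sum_cons]

lemma hvar_atom (atoms : A → Finset V) (i : A) :
    (Plan.atom i : Plan A V).hvar atoms = atoms i := by
  rw [Plan.hvar]

lemma hvar_proj (atoms : A → Finset V) (hv : Finset V) (P : Plan A V) :
    (Plan.proj hv P).hvar atoms = hv := by
  rw [Plan.hvar]

lemma hvar_join (atoms : A → Finset V) (Ps : List (Plan A V)) :
    (Plan.join Ps).hvar atoms = Ps.foldr (fun P acc => P.hvar atoms ∪ acc) ∅ := by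
  rw [Plan.hvar]
  exact attach_foldr_eq Ps (fun P acc => P.hvar atoms ∪ acc) ∅

lemma hvar_subset_join (atoms : A → Finset V) {Ps : List (Plan A V)} {P : Plan A V}
    (hP : P ∈ Ps) : P.hvar atoms ⊆ (Plan.join Ps).hvar atoms := by
  rw [hvar_join]
  induction Ps with
  | nil => cases hP
  | cons Q Ps ih =>
    rw [List.foldr_cons]
    rcases List.mem_cons.1 hP with h | h
    · subst h; exact Finset.subset_union_left
    · exact (ih h).trans Finset.subset_union_right

lemma score_join [Fintype V] [Fintype dom] (atoms : A → Finset V) (D : DB atoms dom)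
    (d₀ : dom) (Ps : List (Plan A V)) (ν : V → dom) :
    (Plan.join Ps).score atoms D d₀ ν
      = (Ps.map (fun Q => Q.score atoms D d₀ ν)).prod := by
  rw [Plan.score]
  congr 1
  conv_rhs => rw [← List.attach_map_val (l := Ps)]

lemma list_prod_01 (l : List ℝ) (h : ∀ r ∈ l, 0 ≤ r ∧ r ≤ 1) :
    0 ≤ l.prod ∧ l.prod ≤ 1 := by
  induction l with
  | nil => simp
  | cons a l ih =>
    have ha := h a List.mem_cons_self
    have hl := ih fun r hr => h r (List.mem_cons_of_mem a hr)
    rw [List.prod_cons]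
    constructor
    · exact mul_nonneg ha.1 hl.1
    · calc a * l.prod ≤ 1 * 1 := by
            apply mul_le_mul ha.2 hl.2 hl.1 zero_le_one
        _ = 1 := by ring

lemma list_map_prod_le {α : Type*} (l : List α) (f g : α → ℝ)
    (h : ∀ x ∈ l, 0 ≤ f x ∧ f x ≤ g x) : (l.map f).prod ≤ (l.map g).prod := by
  induction l with
  | nil => simp
  | cons a l ih =>
    have ha := h a List.mem_cons_self
    have hl := ih fun x hx => h x (List.mem_cons_of_mem a hx)
    rw [List.map_cons, List.map_cons, List.prod_cons, List.prod_cons]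
    have h0f : 0 ≤ (l.map f).prod := by
      apply List.prod_nonneg
      intro r hr
      obtain ⟨x, hx, rfl⟩ := List.mem_map.1 hr
      exact (h x (List.mem_cons_of_mem a hx)).1
    have h0a : 0 ≤ g a := le_trans ha.1 ha.2
    calc f a * (l.map f).prod ≤ g a * (l.map f).prod :=
          mul_le_mul_of_nonneg_right ha.2 h0f
      _ ≤ g a * (l.map g).prod := mul_le_mul_of_nonneg_left hl h0a

/-- Every WF plan’s score lies in `[0,1]` on a valid database. -/
theorem score_mem01 [Fintype V] [Fintype dom] (atoms : A → Finset V) (D : DB atoms dom)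
    (hD : D.Valid) (d₀ : dom) (P : Plan A V) (ν : V → dom) :
    0 ≤ P.score atoms D d₀ ν ∧ P.score atoms D d₀ ν ≤ 1 := by
  match P with
  | .atom i =>
    rw [Plan.score]
    split
    · exact hD i _ ‹_›
    · exact ⟨le_refl 0, zero_le_one⟩
  | .proj hv P =>
    rw [Plan.score]
    have hfac : ∀ μ ∈ Finset.univ.filter (fun μ : V → dom =>
        (∀ v : V, v ∉ P.hvar atoms → μ v = d₀) ∧ ∀ v ∈ hv, μ v = ν v),
        0 ≤ 1 - P.score atoms D d₀ μ ∧ 1 - P.score atoms D d₀ μ ≤ 1 := by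
      intro μ _
      have := score_mem01 atoms D hD d₀ P μ
      constructor <;> linarith [this.1, this.2]
    have h0 : 0 ≤ ∏ μ ∈ Finset.univ.filter (fun μ : V → dom =>
        (∀ v : V, v ∉ P.hvar atoms → μ v = d₀) ∧ ∀ v ∈ hv, μ v = ν v),
        (1 - P.score atoms D d₀ μ) :=
      Finset.prod_nonneg fun μ hμ => (hfac μ hμ).1
    have h1 : (∏ μ ∈ Finset.univ.filter (fun μ : V → dom =>
        (∀ v : V, v ∉ P.hvar atoms → μ v = d₀) ∧ ∀ v ∈ hv, μ v = ν v),
        (1 - P.score atoms D d₀ μ)) ≤ 1 :=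
      Finset.prod_le_one (fun μ hμ => (hfac μ hμ).1) (fun μ hμ => (hfac μ hμ).2)
    constructor <;> linarith
  | .join Ps =>
    rw [score_join]
    apply list_prod_01
    intro r hr
    obtain ⟨Q, hQ, rfl⟩ := List.mem_map.1 hr
    have := List.sizeOf_lt_of_mem hQ
    exact score_mem01 atoms D hD d₀ Q ν
termination_by sizeOf P
decreasing_by
  all_goals simp_wf
  all_goals omega

end PlanStruct

/-! ### The event layer -/

section EventLayer

variable {A V dom : Type*} [Fintype A] [Fintype V] [Fintype dom]

/-- the success probability of tuple coordinates -/
def pD (atoms : A → Finset V) (D : DB atoms dom) :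
    (Σ i : A, {t // t ∈ D.tuples i}) → ℝ :=
  fun x => D.prob x.1 x.2.1

/-- the event that some valuation agreeing with `ν` on `hv` satisfies all atoms in `S` -/
def Ev (atoms : A → Finset V) (D : DB atoms dom) (S : Multiset A) (hv : Finset V)
    (ν : V → dom) (ω : (Σ i : A, {t // t ∈ D.tuples i}) → Bool) : Prop :=
  ∃ μ : V → dom, (∀ v ∈ hv, μ v = ν v) ∧
    ∀ i ∈ S, ∃ h : restrict atoms i μ ∈ D.tuples i,
      ω ⟨i, ⟨restrict atoms i μ, h⟩⟩ = true

lemma hpD (atoms : A → Finset V) (D : DB atoms dom) (hD : D.Valid) :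
    ∀ x : Σ i : A, {t // t ∈ D.tuples i}, 0 ≤ pD atoms D x ∧ pD atoms D x ≤ 1 :=
  fun x => hD x.1 x.2.1 x.2.2

lemma Ev_mono (atoms : A → Finset V) (D : DB atoms dom) (S : Multiset A) (hv : Finset V)
    (ν : V → dom) (ω ω' : (Σ i : A, {t // t ∈ D.tuples i}) → Bool) (hle : ω ≤ ω') :
    Ev atoms D S hv ν ω → Ev atoms D S hv ν ω' := by
  rintro ⟨μ, hμ, hsat⟩
  refine ⟨μ, hμ, fun i hi => ?_⟩
  obtain ⟨h, hω⟩ := hsat i hi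
  refine ⟨h, ?_⟩
  have := hle ⟨i, ⟨restrict atoms i μ, h⟩⟩
  rw [hω] at this
  exact le_antisymm (by cases ω' ⟨i, ⟨restrict atoms i μ, h⟩⟩ <;> simp) this

lemma Ev_DOn (atoms : A → Finset V) (D : DB atoms dom) (S : Multiset A) (hv : Finset V)
    (ν : V → dom) :
    DOn (Ev atoms D S hv ν) {x : Σ i : A, {t // t ∈ D.tuples i} | x.1 ∈ S} := by
  intro ω ω' hagree
  constructor
  · rintro ⟨μ, hμ, hsat⟩
    refine ⟨μ, hμ, fun i hi => ?_⟩
    obtain ⟨h, hω⟩ := hsat i hi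
    exact ⟨h, by rw [← hagree ⟨i, ⟨restrict atoms i μ, h⟩⟩ hi]; exact hω⟩
  · rintro ⟨μ, hμ, hsat⟩
    refine ⟨μ, hμ, fun i hi => ?_⟩
    obtain ⟨h, hω⟩ := hsat i hi
    exact ⟨h, by rw [hagree ⟨i, ⟨restrict atoms i μ, h⟩⟩ hi]; exact hω⟩

lemma DOn_subset {ι : Type*} [Fintype ι] {E : (ι → Bool) → Prop} {s t : Set ι}
    (h : DOn E s) (hst : s ⊆ t) : DOn E t :=
  fun ω ω' hagree => h ω ω' fun i hi => hagree i (hst hi)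

lemma mem_map_sum {α : Type*} (L : List (Plan α V)) (Q : Plan α V) (hQ : Q ∈ L)
    {a : α} (ha : a ∈ Q.atomsOf) : a ∈ (L.map Plan.atomsOf).sum := by
  induction L with
  | nil => cases hQ
  | cons R L ih =>
    rw [List.map_cons, List.sum_cons, Multiset.mem_add]
    rcases List.mem_cons.1 hQ with h | h
    · subst h; exact Or.inl ha
    · exact Or.inr (ih h)

lemma pr_true {ι : Type*} [Fintype ι] (p : ι → ℝ) : pr p (fun _ => True) = 1 := by
  have : pr p (fun _ => True) = ex p (fun _ => 1) := ex_congr fun ω => by simp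
  rw [this, ex_one]

/-- Independence across subplans with disjoint atom sets. -/
lemma pr_forall_list (atoms : A → Finset V) (D : DB atoms dom) (ν : V → dom)
    (L : List (Plan A V)) (hnd : ((L.map Plan.atomsOf).sum).Nodup) :
    pr (pD atoms D) (fun ω => ∀ Q ∈ L, Ev atoms D Q.atomsOf (Q.hvar atoms) ν ω)
      = (L.map (fun Q => pr (pD atoms D) (Ev atoms D Q.atomsOf (Q.hvar atoms) ν))).prod := by
  induction L with
  | nil =>
    rw [List.map_nil, List.prod_nil, ← pr_true (pD atoms D)]
    exact pr_congr fun ω => by simp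
  | cons Q L ih =>
    rw [List.map_cons, List.sum_cons] at hnd
    obtain ⟨hnd1, hnd2, hdisj⟩ := Multiset.nodup_add.1 hnd
    have hsplit : pr (pD atoms D)
        (fun ω => ∀ R ∈ Q :: L, Ev atoms D R.atomsOf (R.hvar atoms) ν ω)
        = pr (pD atoms D) (fun ω => Ev atoms D Q.atomsOf (Q.hvar atoms) ν ω ∧
            ∀ R ∈ L, Ev atoms D R.atomsOf (R.hvar atoms) ν ω) :=
      pr_congr fun ω => by
        constructor
        · intro h
          exact ⟨h Q List.mem_cons_self, fun R hR => h R (List.mem_cons_of_mem Q hR)⟩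
        · rintro ⟨h1, h2⟩ R hR
          rcases List.mem_cons.1 hR with h | h
          · subst h; exact h1
          · exact h2 R h
    rw [hsplit]
    rw [pr_and_indep (pD atoms D) {x : Σ i : A, {t // t ∈ D.tuples i} | x.1 ∈ Q.atomsOf}
      _ _ (Ev_DOn atoms D _ _ ν) ?_]
    · rw [List.map_cons, List.prod_cons, ih hnd2]
    · -- the rest depends only on the complement
      intro ω ω' hagree
      constructor
      · intro h R hR
        refine (Ev_DOn atoms D R.atomsOf (R.hvar atoms) ν ω ω' ?_).1 (h R hR)
        intro x hx
        refine hagree x ?_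
        intro hmem
        exact (Multiset.disjoint_left.1 hdisj) hmem (mem_map_sum L R hR hx)
      · intro h R hR
        refine (Ev_DOn atoms D R.atomsOf (R.hvar atoms) ν ω ω' ?_).2 (h R hR)
        intro x hx
        refine hagree x ?_
        intro hmem
        exact (Multiset.disjoint_left.1 hdisj) hmem (mem_map_sum L R hR hx)

lemma nodup_of_mem_sum {α : Type*} (L : List (Plan α V)) (hnd : ((L.map Plan.atomsOf).sum).Nodup)
    (Q : Plan α V) (hQ : Q ∈ L) : Q.atomsOf.Nodup := by
  induction L with
  | nil => cases hQ
  | cons R L ih =>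
    rw [List.map_cons, List.sum_cons] at hnd
    obtain ⟨h1, h2, _⟩ := Multiset.nodup_add.1 hnd
    rcases List.mem_cons.1 hQ with h | h
    · subst h; exact h1
    · exact ih h2 h

end EventLayer

/-! ### The key bound -/

section KeyLemma

variable {A V dom : Type*} [Fintype A] [Fintype V] [Fintype dom]

theorem key_bound (atoms : A → Finset V) (D : DB atoms dom) (hD : D.Valid) (d₀ : dom)
    (P : Plan A V) (hWF : P.WF atoms) (hnd : P.atomsOf.Nodup) (ν : V → dom) :
    pr (pD atoms D) (Ev atoms D P.atomsOf (P.hvar atoms) ν) ≤ P.score atoms D d₀ ν := by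
  match P with
  | .atom i =>
    rw [atomsOf_atom, hvar_atom, Plan.score]
    have hiff : ∀ ω, Ev atoms D {i} (atoms i) ν ω ↔
        ∃ h : restrict atoms i ν ∈ D.tuples i, ω ⟨i, ⟨restrict atoms i ν, h⟩⟩ = true := by
      intro ω
      constructor
      · rintro ⟨μ, hμ, hsat⟩
        obtain ⟨h, hω⟩ := hsat i (Multiset.mem_singleton_self i)
        have hre : restrict atoms i μ = restrict atoms i ν :=
          funext fun x => hμ x.1 x.2
        refine ⟨hre ▸ h, ?_⟩
        have hco : (⟨i, ⟨restrict atoms i ν, hre ▸ h⟩⟩ : Σ j : A, {t // t ∈ D.tuples j})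
            = ⟨i, ⟨restrict atoms i μ, h⟩⟩ :=
          congrArg (Sigma.mk i) (Subtype.ext hre.symm)
        rw [hco]
        exact hω
      · rintro ⟨h, hω⟩
        refine ⟨ν, fun v _ => rfl, fun j hj => ?_⟩
        rw [Multiset.mem_singleton] at hj
        subst hj
        exact ⟨h, hω⟩
    by_cases hmem : restrict atoms i ν ∈ D.tuples i
    · rw [if_pos hmem]
      have heq : pr (pD atoms D) (Ev atoms D {i} (atoms i) ν) =
          pr (pD atoms D) (fun ω => ω ⟨i, ⟨restrict atoms i ν, hmem⟩⟩ = true) := by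
        refine pr_congr fun ω => (hiff ω).trans ?_
        constructor
        · rintro ⟨h, hω⟩; exact hω
        · intro hω; exact ⟨hmem, hω⟩
      rw [heq, pr_coord]
      exact le_refl _
    · rw [if_neg hmem]
      have heq : pr (pD atoms D) (Ev atoms D {i} (atoms i) ν)
          = pr (pD atoms D) (fun _ => False) := by
        refine pr_congr fun ω => (hiff ω).trans ?_
        constructor
        · rintro ⟨h, _⟩; exact hmem h
        · exact False.elim
      rw [heq, pr_false]
  | .proj hv P =>
    rw [Plan.WF] at hWF
    obtain ⟨hsub, -, hWFP⟩ := hWF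
    rw [atomsOf_proj] at hnd
    rw [atomsOf_proj, hvar_proj, Plan.score]
    set fset := Finset.univ.filter (fun μ : V → dom =>
      (∀ v : V, v ∉ P.hvar atoms → μ v = d₀) ∧ ∀ v ∈ hv, μ v = ν v) with hfset
    have hsubev : ∀ ω, Ev atoms D P.atomsOf hv ν ω →
        ∃ μ' ∈ fset, Ev atoms D P.atomsOf (P.hvar atoms) μ' ω := by
      rintro ω ⟨μ, hμ, hsat⟩
      refine ⟨fun v => if v ∈ P.hvar atoms then μ v else d₀, ?_, μ, ?_, hsat⟩
      · rw [hfset, Finset.mem_filter]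
        exact ⟨Finset.mem_univ _, fun v hv' => if_neg hv',
          fun v hvv => (if_pos (hsub hvv)).trans (hμ v hvv)⟩
      · intro v hv'
        exact (if_pos hv').symm
    have h1 : pr (pD atoms D) (Ev atoms D P.atomsOf hv ν) ≤
        pr (pD atoms D) (fun ω => ∃ μ' ∈ fset, Ev atoms D P.atomsOf (P.hvar atoms) μ' ω) :=
      pr_mono (hpD atoms D hD) hsubev
    have h2 := pr_union (hpD atoms D hD) fset
      (fun μ' => Ev atoms D P.atomsOf (P.hvar atoms) μ')
      (fun μ' _ ω ω' hle => Ev_mono atoms D P.atomsOf (P.hvar atoms) μ' ω ω' hle)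
    have h4 : (∏ μ' ∈ fset, (1 - P.score atoms D d₀ μ')) ≤
        ∏ μ' ∈ fset, (1 - pr (pD atoms D) (Ev atoms D P.atomsOf (P.hvar atoms) μ')) := by
      refine Finset.prod_le_prod ?_ ?_
      · intro μ' _
        have := score_mem01 atoms D hD d₀ P μ'
        linarith [this.2]
      · intro μ' _
        have := key_bound atoms D hD d₀ P hWFP hnd μ'
        linarith
    linarith
  | .join Ps =>
    rw [Plan.WF] at hWF
    rw [atomsOf_join] at hnd
    rw [atomsOf_join, score_join]
    have step1 : pr (pD atoms D)
        (Ev atoms D (Ps.map Plan.atomsOf).sum ((Plan.join Ps).hvar atoms) ν) ≤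
        pr (pD atoms D) (fun ω => ∀ Q ∈ Ps, Ev atoms D Q.atomsOf (Q.hvar atoms) ν ω) := by
      refine pr_mono (hpD atoms D hD) ?_
      rintro ω ⟨μ, hμ, hsat⟩ Q hQ
      exact ⟨μ, fun v hv' => hμ v (hvar_subset_join atoms hQ hv'),
        fun i hi => hsat i (mem_map_sum Ps Q hQ hi)⟩
    have step2 := pr_forall_list atoms D ν Ps hnd
    have step3 : (Ps.map (fun Q =>
        pr (pD atoms D) (Ev atoms D Q.atomsOf (Q.hvar atoms) ν))).prod ≤
        (Ps.map (fun Q => Q.score atoms D d₀ ν)).prod := by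
      refine list_map_prod_le Ps _ _ ?_
      intro Q hQ
      constructor
      · exact pr_nonneg (hpD atoms D hD) _
      · have hs := List.sizeOf_lt_of_mem hQ
        exact key_bound atoms D hD d₀ Q (hWF.2 Q hQ).2 (nodup_of_mem_sum Ps hnd Q hQ) ν
    exact step1.trans ((le_of_eq step2).trans step3)
termination_by sizeOf P
decreasing_by
  all_goals simp_wf
  all_goals omega

end KeyLemma

section FinalTheorem

variable {A V dom : Type*} [Fintype A] [Fintype V] [Fintype dom]

set_option maxHeartbeats 1000000 in
lemma queryProb_eq_pr (atoms : A → Finset V) (D : DB atoms dom) [Inhabited dom] :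
    queryProb atoms D = pr (pD atoms D)
      (Ev atoms D (Finset.univ : Finset A).val ∅ (fun _ => default)) := by
  have main : (∑ ω : (Σ i : A, {t // t ∈ D.tuples i}) → Bool,
      wgt (pD atoms D) ω *
        (if Ev atoms D (Finset.univ : Finset A).val ∅ (fun _ => default) ω
          then (1:ℝ) else 0))
      = ∑ W : ∀ i : A, {t // t ∈ D.tuples i} → Bool,
        (∏ i : A, ∏ t : {t // t ∈ D.tuples i},
          if W i t = true then D.prob i t.1 else 1 - D.prob i t.1) *
        (if ∃ νv : V → dom, ∀ i : A, ∃ h : restrict atoms i νv ∈ D.tuples i,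
            W i ⟨restrict atoms i νv, h⟩ = true then (1:ℝ) else 0) := by
    refine Fintype.sum_equiv
      (Equiv.piCurry (fun (i : A) (_ : {t // t ∈ D.tuples i}) => Bool)) _ _ fun ω => ?_
    congr 1
    · rw [wgt, ← Finset.univ_sigma_univ, Finset.prod_sigma]
      exact Finset.prod_congr rfl fun i _ => Finset.prod_congr rfl fun t _ => rfl
    · have hiff : Ev atoms D (Finset.univ : Finset A).val ∅ (fun _ => default) ω ↔
          (∃ νv : V → dom, ∀ i : A, ∃ h : restrict atoms i νv ∈ D.tuples i,
            (Equiv.piCurry (fun (i : A) (_ : {t // t ∈ D.tuples i}) => Bool)) ω i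
              ⟨restrict atoms i νv, h⟩ = true) := by
        constructor
        · rintro ⟨μ, -, hsat⟩
          exact ⟨μ, fun i => hsat i (Finset.mem_univ i)⟩
        · rintro ⟨νv, hsat⟩
          exact ⟨νv, fun v hv => absurd hv (Finset.notMem_empty v), fun i _ => hsat i⟩
      by_cases h : Ev atoms D (Finset.univ : Finset A).val ∅ (fun _ => default) ω
      · rw [if_pos h, if_pos (hiff.1 h)]
      · rw [if_neg h, if_neg (fun hc => h (hiff.2 hc))]
  have bridge1 : queryProb atoms D
      = ∑ W : ∀ i : A, {t // t ∈ D.tuples i} → Bool,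
        (∏ i : A, ∏ t : {t // t ∈ D.tuples i},
          if W i t = true then D.prob i t.1 else 1 - D.prob i t.1) *
        (if ∃ νv : V → dom, ∀ i : A, ∃ h : restrict atoms i νv ∈ D.tuples i,
            W i ⟨restrict atoms i νv, h⟩ = true then (1:ℝ) else 0) :=
    sum_univ_congr _ _ _ _ fun W => by
      congr 1
      by_cases h : ∃ νv : V → dom, ∀ i : A, ∃ hh : restrict atoms i νv ∈ D.tuples i,
          W i ⟨restrict atoms i νv, hh⟩ = true
      · rw [if_pos h, if_pos h]
      · rw [if_neg h, if_neg h]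
  have bridge2 : (∑ ω : (Σ i : A, {t // t ∈ D.tuples i}) → Bool,
      wgt (pD atoms D) ω *
        (if Ev atoms D (Finset.univ : Finset A).val ∅ (fun _ => default) ω
          then (1:ℝ) else 0))
      = pr (pD atoms D) (Ev atoms D (Finset.univ : Finset A).val ∅ (fun _ => default)) :=
    sum_univ_congr _ _ _ _ fun ω => rfl
  exact bridge1.trans (main.symm.trans bridge2)

end FinalTheorem


/-- Every plan computes an upper bound.  Let `P` be any query plan for a
Boolean self-join-free conjunctive query `q`.  Then for every tuple-independent
probabilistic database `D`, `P(q) ≤ score(P)`. -/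
theorem plan_score_upper_bound
    {A V dom : Type*} [Fintype A] [Fintype V] [Fintype dom] [Inhabited dom]
    (atoms : A → Finset V) (D : DB atoms dom) (hD : D.Valid)
    (P : Plan A V) (hP : Plan.IsPlanFor atoms ∅ P) :
    queryProb atoms D ≤ Plan.bscore atoms D P := by
  obtain ⟨hWF, hatoms, hhvar⟩ := hP
  have hnd : P.atomsOf.Nodup := by
    rw [hatoms]
    exact Finset.univ.nodup
  have hkb := key_bound atoms D hD default P hWF hnd (fun _ => default)
  rw [hatoms, hhvar] at hkb
  rw [queryProb_eq_pr atoms D]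
  exact hkb

end

end PDB
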